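/- arXiv:2604.04227 — 2 statements merged into one kernel-verified Lean document; each statement's English description precedes it below -/
import Mathlib

section
/- (Brenier) Let X and Y be closed subsets of ℝ^d, let μ be a Borel probability measure on X absolutely continuous with respect to Lebesgue measure, and let ν be a Borel probability measure on Y, with ∫ ‖x‖² dμ(x) < ∞ and ∫ ‖y‖² dν(y) < ∞. Let ϑ be a convex function whose gradient pushes μ forward to ν. Then the deterministic coupling given by the law of (X, ∇ϑ(X)) with X ∼ μ is the unique optimal transport plan for the quadratic cost c(x,y) = ‖x−y‖²/2, i.e., ∫ ‖x − ∇ϑ(x)‖²/2 dμ(x) = inf_{π ∈ M(μ,ν)} ∫ ‖x−y‖²/2 dπ(x,y), and any optimal coupling coincides with this one. -/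
open MeasureTheory Set InnerProductSpace TopologicalSpace
open scoped RealInnerProductSpace

section BrenierAux

variable {E : Type*} [NormedAddCommGroup E] [InnerProductSpace ℝ E]

/-- Derivative of `ϑ` along a line. -/
lemma brenier_line_hasDerivAt [CompleteSpace E] (ϑ : E → ℝ) {x : E}
    (hx : DifferentiableAt ℝ ϑ x) (v : E) :
    HasDerivAt (fun t : ℝ => ϑ (x + t • v)) ⟪gradient ϑ x, v⟫ 0 := by
  have hF : HasFDerivAt ϑ (toDual ℝ E (gradient ϑ x)) x :=
    hasGradientAt_iff_hasFDerivAt.1 hx.hasGradientAt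
  have hline : HasDerivAt (fun t : ℝ => x + t • v) v 0 := by
    simpa using ((hasDerivAt_id (0:ℝ)).smul_const v).const_add x
  have h0 : x + (0:ℝ) • v = x := by simp
  have hF' : HasFDerivAt ϑ (toDual ℝ E (gradient ϑ x)) (x + (0:ℝ) • v) := by
    rw [h0]; exact hF
  have := hF'.comp_hasDerivAt (x := (0:ℝ)) hline
  simpa [toDual_apply_apply, Function.comp_def] using this

/-- Gradient inequality for convex functions. -/
lemma brenier_convexOn_grad_le [CompleteSpace E] (ϑ : E → ℝ) (hϑ : ConvexOn ℝ univ ϑ) {x : E}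
    (hx : DifferentiableAt ℝ ϑ x) (z : E) :
    ϑ x + ⟪gradient ϑ x, z - x⟫ ≤ ϑ z := by
  have hg : ConvexOn ℝ univ (fun t : ℝ => ϑ (x + t • (z - x))) := by
    have hL := hϑ.comp_affineMap (AffineMap.lineMap (k := ℝ) x z)
    rw [preimage_univ] at hL
    have : (ϑ ∘ ⇑(AffineMap.lineMap (k := ℝ) x z)) = fun t : ℝ => ϑ (x + t • (z - x)) := by
      funext t
      simp only [Function.comp_apply, AffineMap.lineMap_apply_module']
      congr 1
      abel
    rwa [this] at hL
  have hd := brenier_line_hasDerivAt ϑ hx (z - x)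
  have h := hg.le_slope_of_hasDerivAt (mem_univ (0:ℝ)) (mem_univ (1:ℝ)) one_pos hd
  rw [slope_def_field] at h
  simp only [one_smul, zero_smul, add_zero, sub_zero, div_one] at h
  have hz : x + (z - x) = z := by abel
  rw [hz] at h
  linarith

/-- A subgradient at a point of differentiability equals the gradient. -/
lemma brenier_eq_gradient_of_subgradient [CompleteSpace E] (ϑ : E → ℝ) {x : E}
    (hx : DifferentiableAt ℝ ϑ x) {y : E} (h : ∀ z, ϑ x + ⟪y, z - x⟫ ≤ ϑ z) :
    y = gradient ϑ x := by
  have key : ∀ v : E, ⟪gradient ϑ x - y, v⟫ = 0 := by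
    intro v
    have hd : HasDerivAt (fun t : ℝ => ϑ (x + t • v) - t * ⟪y, v⟫)
        (⟪gradient ϑ x, v⟫ - ⟪y, v⟫) 0 := by
      simpa [Pi.sub_def] using (brenier_line_hasDerivAt ϑ hx v).sub
        ((hasDerivAt_id (0:ℝ)).mul_const ⟪y, v⟫)
    have hmin : IsLocalMin (fun t : ℝ => ϑ (x + t • v) - t * ⟪y, v⟫) 0 := by
      apply Filter.Eventually.of_forall
      intro t
      have := h (x + t • v)
      simp only [add_sub_cancel_left, inner_smul_right] at this ⊢
      simp only [zero_smul, add_zero, zero_mul, sub_zero]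
      linarith [this]
    have := hmin.deriv_eq_zero
    rw [hd.deriv] at this
    rw [inner_sub_left]
    linarith
  have := key (gradient ϑ x - y)
  rw [inner_self_eq_zero, sub_eq_zero] at this
  exact this.symm

/-- Rademacher for convex functions: a.e. differentiability. -/
lemma brenier_convexOn_ae_differentiableAt [FiniteDimensional ℝ E] [MeasurableSpace E]
    [BorelSpace E] (μ' : Measure E) [μ'.IsAddHaarMeasure] {ϑ : E → ℝ}
    (hϑ : ConvexOn ℝ univ ϑ) :
    ∀ᵐ x ∂μ', DifferentiableAt ℝ ϑ x := by
  have hLL : LocallyLipschitzOn univ ϑ := hϑ.locallyLipschitzOn isOpen_univ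
  rw [ae_iff]
  apply measure_null_of_locally_null
  intro x _
  obtain ⟨K, t, ht, hKt⟩ := hLL (mem_univ x)
  rw [nhdsWithin_univ] at ht
  refine ⟨{a | ¬DifferentiableAt ℝ ϑ a} ∩ interior t, ?_, ?_⟩
  · exact inter_mem_nhdsWithin _ (interior_mem_nhds.2 ht)
  · have hae : ∀ᵐ a ∂μ', a ∈ interior t → DifferentiableAt ℝ ϑ a := by
      filter_upwards [(hKt.mono interior_subset).ae_differentiableWithinAt_of_mem (μ := μ')]
        with a ha hai
      exact (ha hai).differentiableAt (isOpen_interior.mem_nhds hai)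
    rw [← nonpos_iff_eq_zero]
    calc μ' ({a | ¬DifferentiableAt ℝ ϑ a} ∩ interior t)
        ≤ μ' {a | ¬(a ∈ interior t → DifferentiableAt ℝ ϑ a)} := by
          apply measure_mono
          rintro a ⟨h1, h2⟩
          simp only [mem_setOf_eq]
          intro h
          exact h1 (h h2)
      _ = 0 := hae

lemma brenier_measurable_gradient [CompleteSpace E] [MeasurableSpace E] [BorelSpace E]
    (ϑ : E → ℝ) : Measurable (gradient ϑ) :=
  (LinearIsometryEquiv.continuous _).measurable.comp (measurable_fderiv ℝ ϑ)

/-- Approximate Legendre transform of `ϑ` along a sequence `q`. -/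
noncomputable def brenierPhi (ϑ : E → ℝ) (q : ℕ → E) (y : E) : ℝ :=
  ⨆ n, (⟪q n, y⟫ - ϑ (q n))

/-- Points where the sup defining `brenierPhi` is a genuine supremum. -/
def brenierGood (ϑ : E → ℝ) (q : ℕ → E) : Set E :=
  {y | BddAbove (range fun n => ⟪q n, y⟫ - ϑ (q n))}

section meas
variable [MeasurableSpace E] [BorelSpace E] [SecondCountableTopology E]

omit [InnerProductSpace ℝ E] in
lemma brenier_measurable_term (ϑ : E → ℝ) (q : ℕ → E) (n : ℕ)
    [InnerProductSpace ℝ E] :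
    Measurable fun y : E => ⟪q n, y⟫ - ϑ (q n) :=
  ((continuous_const.inner continuous_id).sub continuous_const).measurable

lemma brenier_measurable_phi (ϑ : E → ℝ) (q : ℕ → E) : Measurable (brenierPhi ϑ q) :=
  Measurable.iSup fun n => brenier_measurable_term ϑ q n

lemma brenier_measurableSet_good (ϑ : E → ℝ) (q : ℕ → E) :
    MeasurableSet (brenierGood ϑ q) :=
  measurableSet_bddAbove_range fun n => brenier_measurable_term ϑ q n

end meas

/-- Fenchel–Young inequality on the good set. -/
lemma brenierPhi_ge {ϑ : E → ℝ} (hϑc : Continuous ϑ) {q : ℕ → E} (hq : DenseRange q)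
    {y : E} (hy : y ∈ brenierGood ϑ q) (x : E) :
    ⟪x, y⟫ - ϑ x ≤ brenierPhi ϑ q y := by
  have hC : IsClosed {x : E | ⟪x, y⟫ - ϑ x ≤ brenierPhi ϑ q y} :=
    isClosed_le (((continuous_id.inner continuous_const)).sub hϑc) continuous_const
  have hsub : range q ⊆ {x : E | ⟪x, y⟫ - ϑ x ≤ brenierPhi ϑ q y} := by
    rintro - ⟨n, rfl⟩
    exact le_ciSup hy n
  have := hC.closure_subset_iff.2 hsub
  rw [hq.closure_range] at this
  exact this (mem_univ x)

/-- At a gradient of a differentiability point, the sup is attained there. -/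
lemma brenierPhi_at_grad [CompleteSpace E] {ϑ : E → ℝ} (hϑ : ConvexOn ℝ univ ϑ)
    (hϑc : Continuous ϑ) {q : ℕ → E} (hq : DenseRange q) {x : E}
    (hx : DifferentiableAt ℝ ϑ x) :
    gradient ϑ x ∈ brenierGood ϑ q ∧
      brenierPhi ϑ q (gradient ϑ x) = ⟪x, gradient ϑ x⟫ - ϑ x := by
  have hbd : ∀ z : E, ⟪z, gradient ϑ x⟫ - ϑ z ≤ ⟪x, gradient ϑ x⟫ - ϑ x := by
    intro z
    have h1 := brenier_convexOn_grad_le ϑ hϑ hx z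
    have h2 : ⟪gradient ϑ x, z - x⟫ = ⟪z, gradient ϑ x⟫ - ⟪x, gradient ϑ x⟫ := by
      rw [inner_sub_right, real_inner_comm x (gradient ϑ x), real_inner_comm z (gradient ϑ x)]
    rw [h2] at h1
    linarith
  have hgood : gradient ϑ x ∈ brenierGood ϑ q := by
    refine ⟨⟪x, gradient ϑ x⟫ - ϑ x, ?_⟩
    rintro - ⟨n, rfl⟩
    exact hbd (q n)
  refine ⟨hgood, le_antisymm (ciSup_le fun n => hbd (q n)) ?_⟩
  refine le_of_forall_sub_le fun ε hε => ?_
  set v := ⟪x, gradient ϑ x⟫ - ϑ x with hv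
  have hU : IsOpen {z : E | v - ε < ⟪z, gradient ϑ x⟫ - ϑ z} :=
    isOpen_lt continuous_const ((continuous_id.inner continuous_const).sub hϑc)
  have hxU : x ∈ {z : E | v - ε < ⟪z, gradient ϑ x⟫ - ϑ z} := by
    simp only [mem_setOf_eq, hv]
    linarith
  obtain ⟨n, hn⟩ := hq.exists_mem_open hU ⟨x, hxU⟩
  calc v - ε ≤ ⟪q n, gradient ϑ x⟫ - ϑ (q n) := le_of_lt hn
    _ ≤ brenierPhi ϑ q (gradient ϑ x) := le_ciSup hgood n

end BrenierAux

/-- A coupling of `(μ, ν)`: a measure on the product whose marginals are `μ` and `ν`. -/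
def IsCoupling {X Y : Type*} [MeasurableSpace X] [MeasurableSpace Y]
    (π : Measure (X × Y)) (μ : Measure X) (ν : Measure Y) : Prop :=
  π.map Prod.fst = μ ∧ π.map Prod.snd = ν

/-- Brenier's theorem: if `μ` is absolutely continuous, both measures have finite second
moments, and `ϑ` is a convex function whose gradient pushes `μ` forward to `ν`, then the
deterministic coupling `(X, ∇ϑ(X))` is the unique optimal transport plan for the quadratic
cost `‖x - y‖²/2`. -/
theorem brenier_optimality
    {d : ℕ}
    (SX SY : Set (EuclideanSpace ℝ (Fin d))) (hSX : IsClosed SX) (hSY : IsClosed SY)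
    (μ ν : Measure (EuclideanSpace ℝ (Fin d)))
    [IsProbabilityMeasure μ] [IsProbabilityMeasure ν]
    (hμS : μ SXᶜ = 0) (hνS : ν SYᶜ = 0)
    (hac : μ ≪ volume)
    (hμ2 : Integrable (fun x => ‖x‖ ^ 2) μ) (hν2 : Integrable (fun y => ‖y‖ ^ 2) ν)
    (ϑ : EuclideanSpace ℝ (Fin d) → ℝ) (hϑ : ConvexOn ℝ univ ϑ)
    (hpush : μ.map (gradient ϑ) = ν) :
    (∫ x, ‖x - gradient ϑ x‖ ^ 2 / 2 ∂μ
        = sInf {r : ℝ |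
            ∃ π : Measure (EuclideanSpace ℝ (Fin d) × EuclideanSpace ℝ (Fin d)),
              IsCoupling π μ ν ∧ r = ∫ z, ‖z.1 - z.2‖ ^ 2 / 2 ∂π})
    ∧ (∀ π : Measure (EuclideanSpace ℝ (Fin d) × EuclideanSpace ℝ (Fin d)),
        IsCoupling π μ ν →
        (∀ π' : Measure (EuclideanSpace ℝ (Fin d) × EuclideanSpace ℝ (Fin d)),
          IsCoupling π' μ ν → ∫ z, ‖z.1 - z.2‖ ^ 2 / 2 ∂π ≤ ∫ z, ‖z.1 - z.2‖ ^ 2 / 2 ∂π') →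
        π = μ.map (fun x => (x, gradient ϑ x))) := by
  classical
  set g : (EuclideanSpace ℝ (Fin d)) → (EuclideanSpace ℝ (Fin d)) := gradient ϑ with hg_def
  have hgm : Measurable g := brenier_measurable_gradient ϑ
  have hϑc : Continuous ϑ := by
    rw [← continuousOn_univ]
    exact hϑ.continuousOn isOpen_univ
  have hdiff : ∀ᵐ x ∂μ, DifferentiableAt ℝ ϑ x :=
    (brenier_convexOn_ae_differentiableAt volume hϑ).filter_mono hac.ae_le
  set q : ℕ → (EuclideanSpace ℝ (Fin d)) := denseSeq (EuclideanSpace ℝ (Fin d)) with hq_def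
  have hq : DenseRange q := denseRange_denseSeq (EuclideanSpace ℝ (Fin d))
  set φ : (EuclideanSpace ℝ (Fin d)) → ℝ := brenierPhi ϑ q with hφ_def
  set G : Set (EuclideanSpace ℝ (Fin d)) := brenierGood ϑ q with hG_def
  have hφm : Measurable φ := brenier_measurable_phi ϑ q
  have hGm : MeasurableSet G := brenier_measurableSet_good ϑ q
  -- integrability basics
  have sq_dom : ∀ t : ℝ, 0 ≤ t → t ≤ t ^ 2 + 1 := by
    intro t ht; nlinarith [sq_nonneg (t - 1)]
  have hμ1 : Integrable (fun x : (EuclideanSpace ℝ (Fin d)) => ‖x‖) μ := by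
    refine (hμ2.add (integrable_const 1)).mono'
      (continuous_norm.aestronglyMeasurable) ?_
    filter_upwards with x
    simp only [Pi.add_apply]
    rw [Real.norm_eq_abs, abs_of_nonneg (norm_nonneg x)]
    exact sq_dom _ (norm_nonneg x)
  have hg2 : Integrable (fun x : (EuclideanSpace ℝ (Fin d)) => ‖g x‖ ^ 2) μ := by
    have := hν2
    rw [← hpush] at this
    exact (integrable_map_measure
      (continuous_norm.pow 2).aestronglyMeasurable hgm.aemeasurable).mp this
  have hg1 : Integrable (fun x : (EuclideanSpace ℝ (Fin d)) => ‖g x‖) μ := by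
    refine (hg2.add (integrable_const 1)).mono'
      ((continuous_norm.measurable.comp hgm).aestronglyMeasurable) ?_
    filter_upwards with x
    simp only [Pi.add_apply, Function.comp_apply]
    rw [Real.norm_eq_abs, abs_of_nonneg (norm_nonneg _)]
    exact sq_dom _ (norm_nonneg _)
  have hinner_bound : ∀ a b : (EuclideanSpace ℝ (Fin d)), |⟪a, b⟫| ≤ ‖a‖ ^ 2 + ‖b‖ ^ 2 := by
    intro a b
    refine (abs_real_inner_le_norm a b).trans ?_
    nlinarith [sq_nonneg (‖a‖ - ‖b‖), norm_nonneg a, norm_nonneg b]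
  have hxg : Integrable (fun x : (EuclideanSpace ℝ (Fin d)) => ⟪x, g x⟫) μ := by
    refine (hμ2.add hg2).mono' ((measurable_id.inner hgm).aestronglyMeasurable) ?_
    filter_upwards with x
    rw [Real.norm_eq_abs]
    exact hinner_bound x (g x)
  -- integrability of ϑ
  have : (Filter.NeBot (ae μ)) := ae_neBot.mpr (IsProbabilityMeasure.ne_zero μ)
  obtain ⟨x₀, hx₀⟩ := hdiff.exists
  set v₀ : (EuclideanSpace ℝ (Fin d)) := g x₀ with hv₀
  have hϑint : Integrable ϑ μ := by
    have hbound : Integrable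
        (fun x : (EuclideanSpace ℝ (Fin d)) => |ϑ x₀| + ‖v₀‖ * (‖x‖ + ‖x₀‖) + ‖g x‖ * (‖x‖ + ‖x₀‖)) μ := by
      have h1 : Integrable (fun x : (EuclideanSpace ℝ (Fin d)) => ‖v₀‖ * (‖x‖ + ‖x₀‖)) μ :=
        ((hμ1.add (integrable_const ‖x₀‖)).const_mul ‖v₀‖)
      have h2 : Integrable (fun x : (EuclideanSpace ℝ (Fin d)) => ‖g x‖ * (‖x‖ + ‖x₀‖)) μ := by
        have hb : Integrable (fun x : (EuclideanSpace ℝ (Fin d)) => (‖x‖ ^ 2 + ‖g x‖ ^ 2) + ‖g x‖ * ‖x₀‖) μ :=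
          (hμ2.add hg2).add (hg1.mul_const ‖x₀‖)
        refine hb.mono'
          (((continuous_norm.measurable.comp hgm).mul
            (measurable_norm.add_const ‖x₀‖)).aestronglyMeasurable) ?_
        filter_upwards with x
        rw [Real.norm_eq_abs, abs_of_nonneg (by positivity)]
        have : ‖g x‖ * ‖x‖ ≤ ‖x‖ ^ 2 + ‖g x‖ ^ 2 := by nlinarith [sq_nonneg (‖x‖ - ‖g x‖)]
        ring_nf
        nlinarith [norm_nonneg (g x), norm_nonneg x, norm_nonneg x₀]
      exact ((integrable_const |ϑ x₀|).add h1).add h2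
    refine hbound.mono' hϑc.aestronglyMeasurable ?_
    filter_upwards [hdiff] with x hx
    rw [Real.norm_eq_abs, abs_le]
    constructor
    · -- lower bound via subgradient at x₀
      have h := brenier_convexOn_grad_le ϑ hϑ hx₀ x
      have hb : |⟪gradient ϑ x₀, x - x₀⟫| ≤ ‖v₀‖ * (‖x‖ + ‖x₀‖) := by
        refine (abs_real_inner_le_norm _ _).trans ?_
        have : ‖x - x₀‖ ≤ ‖x‖ + ‖x₀‖ := norm_sub_le x x₀
        have hv : ‖gradient ϑ x₀‖ = ‖v₀‖ := rfl
        rw [hv]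
        exact mul_le_mul_of_nonneg_left this (norm_nonneg _)
      have := abs_le.1 hb
      have hgx0 : ‖g x‖ * (‖x‖ + ‖x₀‖) ≥ 0 := by positivity
      have habs : -|ϑ x₀| ≤ ϑ x₀ := neg_abs_le _
      linarith
    · -- upper bound via subgradient at x
      have h := brenier_convexOn_grad_le ϑ hϑ hx x₀
      have hb : |⟪gradient ϑ x, x₀ - x⟫| ≤ ‖g x‖ * (‖x‖ + ‖x₀‖) := by
        refine (abs_real_inner_le_norm _ _).trans ?_
        have h1 : ‖x₀ - x‖ ≤ ‖x‖ + ‖x₀‖ := by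
          have := norm_sub_le x₀ x
          linarith
        exact mul_le_mul_of_nonneg_left h1 (norm_nonneg _)
      have := abs_le.1 hb
      have hv0 : ‖v₀‖ * (‖x‖ + ‖x₀‖) ≥ 0 := by positivity
      have habs : ϑ x₀ ≤ |ϑ x₀| := le_abs_self _
      linarith
  -- key facts about φ
  have key2 : ∀ x : (EuclideanSpace ℝ (Fin d)), DifferentiableAt ℝ ϑ x →
      g x ∈ G ∧ φ (g x) = ⟪x, g x⟫ - ϑ x := fun x hx =>
    brenierPhi_at_grad hϑ hϑc hq hx
  have hGc : ν Gᶜ = 0 := by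
    rw [← hpush, Measure.map_apply hgm hGm.compl]
    refine measure_mono_null (fun x hx => ?_) (ae_iff.1 hdiff)
    simp only [mem_setOf_eq]
    intro hdx
    exact hx (key2 x hdx).1
  have hφg : ∀ᵐ x ∂μ, φ (g x) = ⟪x, g x⟫ - ϑ x := by
    filter_upwards [hdiff] with x hx
    exact (key2 x hx).2
  have hφgint : Integrable (fun x : (EuclideanSpace ℝ (Fin d)) => φ (g x)) μ := by
    apply (hxg.sub hϑint).congr
    filter_upwards [hφg] with x hx using hx.symm
  have hφν : Integrable φ ν := by
    rw [← hpush]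
    exact (integrable_map_measure hφm.aestronglyMeasurable hgm.aemeasurable).mpr hφgint
  have hφν_eq : ∫ y, φ y ∂ν = ∫ x, ⟪x, g x⟫ ∂μ - ∫ x, ϑ x ∂μ := by
    rw [← hpush, integral_map hgm.aemeasurable hφm.aestronglyMeasurable]
    rw [integral_congr_ae hφg, integral_sub hxg hϑint]
  -- the constant K
  set K : ℝ := ∫ x, ⟪x, g x⟫ ∂μ with hK
  set A : ℝ := ∫ x, ‖x‖ ^ 2 / 2 ∂μ with hA
  have hA_int : Integrable (fun x : (EuclideanSpace ℝ (Fin d)) => ‖x‖ ^ 2 / 2) μ := hμ2.div_const 2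
  set B : ℝ := ∫ y, ‖y‖ ^ 2 / 2 ∂ν with hB
  have hB_int : Integrable (fun y : (EuclideanSpace ℝ (Fin d)) => ‖y‖ ^ 2 / 2) ν := hν2.div_const 2
  -- the value of the deterministic coupling
  have hdet_val : ∫ x, ‖x - g x‖ ^ 2 / 2 ∂μ = A + B - K := by
    have hg2' : Integrable (fun x : (EuclideanSpace ℝ (Fin d)) => ‖g x‖ ^ 2 / 2) μ := hg2.div_const 2
    have hBμ : B = ∫ x, ‖g x‖ ^ 2 / 2 ∂μ := by
      rw [hB, ← hpush, integral_map hgm.aemeasurable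
        (by fun_prop : Continuous fun y : EuclideanSpace ℝ (Fin d) => ‖y‖ ^ 2 / 2).aestronglyMeasurable]
    have hpt : (fun x : (EuclideanSpace ℝ (Fin d)) => ‖x - g x‖ ^ 2 / 2)
        = fun x : (EuclideanSpace ℝ (Fin d)) => (‖x‖ ^ 2 / 2 + ‖g x‖ ^ 2 / 2) - ⟪x, g x⟫ := by
      funext x
      rw [norm_sub_sq_real]
      ring
    have hsum : Integrable (fun x : (EuclideanSpace ℝ (Fin d)) => ‖x‖ ^ 2 / 2 + ‖g x‖ ^ 2 / 2) μ :=
      hA_int.add hg2'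
    rw [hpt, integral_sub hsum hxg, integral_add hA_int hg2', hBμ]
  -- integrability and value transfers for a general coupling
  have coupling_facts : ∀ π : Measure ((EuclideanSpace ℝ (Fin d)) × (EuclideanSpace ℝ (Fin d))), IsCoupling π μ ν →
      (∫ z : (EuclideanSpace ℝ (Fin d)) × (EuclideanSpace ℝ (Fin d)), ‖z.1 - z.2‖ ^ 2 / 2 ∂π
          = A + B - ∫ z : (EuclideanSpace ℝ (Fin d)) × (EuclideanSpace ℝ (Fin d)), ⟪z.1, z.2⟫ ∂π)
      ∧ Integrable (fun z : (EuclideanSpace ℝ (Fin d)) × (EuclideanSpace ℝ (Fin d)) => ⟪z.1, z.2⟫) π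
      ∧ Integrable (fun z : (EuclideanSpace ℝ (Fin d)) × (EuclideanSpace ℝ (Fin d)) => ϑ z.1 + φ z.2) π
      ∧ (∫ z : (EuclideanSpace ℝ (Fin d)) × (EuclideanSpace ℝ (Fin d)), (ϑ z.1 + φ z.2) ∂π = K) := by
    intro π hπ
    obtain ⟨hπ1, hπ2⟩ := hπ
    have int_fst : ∀ (f : (EuclideanSpace ℝ (Fin d)) → ℝ), Measurable f → Integrable f μ →
        Integrable (fun z : (EuclideanSpace ℝ (Fin d)) × (EuclideanSpace ℝ (Fin d)) => f z.1) π := by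
      intro f hf hfi
      have : Integrable f (π.map Prod.fst) := hπ1 ▸ hfi
      exact (integrable_map_measure hf.aestronglyMeasurable
        measurable_fst.aemeasurable).mp this
    have int_snd : ∀ (f : (EuclideanSpace ℝ (Fin d)) → ℝ), Measurable f → Integrable f ν →
        Integrable (fun z : (EuclideanSpace ℝ (Fin d)) × (EuclideanSpace ℝ (Fin d)) => f z.2) π := by
      intro f hf hfi
      have : Integrable f (π.map Prod.snd) := hπ2 ▸ hfi
      exact (integrable_map_measure hf.aestronglyMeasurable
        measurable_snd.aemeasurable).mp this
    have eq_fst : ∀ (f : (EuclideanSpace ℝ (Fin d)) → ℝ), Measurable f →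
        ∫ z : (EuclideanSpace ℝ (Fin d)) × (EuclideanSpace ℝ (Fin d)), f z.1 ∂π = ∫ x, f x ∂μ := by
      intro f hf
      rw [← hπ1, integral_map measurable_fst.aemeasurable hf.aestronglyMeasurable]
    have eq_snd : ∀ (f : (EuclideanSpace ℝ (Fin d)) → ℝ), Measurable f →
        ∫ z : (EuclideanSpace ℝ (Fin d)) × (EuclideanSpace ℝ (Fin d)), f z.2 ∂π = ∫ y, f y ∂ν := by
      intro f hf
      rw [← hπ2, integral_map measurable_snd.aemeasurable hf.aestronglyMeasurable]
    have int1 : Integrable (fun z : (EuclideanSpace ℝ (Fin d)) × (EuclideanSpace ℝ (Fin d)) => ‖z.1‖ ^ 2 / 2) π :=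
      int_fst _ ((measurable_norm.pow_const 2).div_const 2) hA_int
    have int2 : Integrable (fun z : (EuclideanSpace ℝ (Fin d)) × (EuclideanSpace ℝ (Fin d)) => ‖z.2‖ ^ 2 / 2) π :=
      int_snd _ ((measurable_norm.pow_const 2).div_const 2) hB_int
    have hsum12 : Integrable (fun z : (EuclideanSpace ℝ (Fin d)) × (EuclideanSpace ℝ (Fin d)) =>
        ‖z.1‖ ^ 2 / 2 + ‖z.2‖ ^ 2 / 2) π := int1.add int2
    have intinner : Integrable (fun z : (EuclideanSpace ℝ (Fin d)) × (EuclideanSpace ℝ (Fin d)) => ⟪z.1, z.2⟫) π := by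
      refine ((hsum12.const_mul 2).mono'
        ((measurable_fst.inner measurable_snd).aestronglyMeasurable)) ?_
      filter_upwards with z
      rw [Real.norm_eq_abs]
      calc |⟪z.1, z.2⟫| ≤ ‖z.1‖ ^ 2 + ‖z.2‖ ^ 2 := hinner_bound z.1 z.2
        _ = 2 * (‖z.1‖ ^ 2 / 2 + ‖z.2‖ ^ 2 / 2) := by ring
    have intϑ : Integrable (fun z : (EuclideanSpace ℝ (Fin d)) × (EuclideanSpace ℝ (Fin d)) => ϑ z.1) π :=
      int_fst ϑ hϑc.measurable hϑint
    have intφ : Integrable (fun z : (EuclideanSpace ℝ (Fin d)) × (EuclideanSpace ℝ (Fin d)) => φ z.2) π :=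
      int_snd φ hφm hφν
    refine ⟨?_, intinner, intϑ.add intφ, ?_⟩
    · have hpt : (fun z : (EuclideanSpace ℝ (Fin d)) × (EuclideanSpace ℝ (Fin d)) => ‖z.1 - z.2‖ ^ 2 / 2)
          = fun z : (EuclideanSpace ℝ (Fin d)) × (EuclideanSpace ℝ (Fin d)) => (‖z.1‖ ^ 2 / 2 + ‖z.2‖ ^ 2 / 2) - ⟪z.1, z.2⟫ := by
        funext z
        rw [norm_sub_sq_real]
        ring
      rw [hpt, integral_sub hsum12 intinner, integral_add int1 int2,
        eq_fst _ ((measurable_norm.pow_const 2).div_const 2),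
        eq_snd _ ((measurable_norm.pow_const 2).div_const 2)]
    · rw [integral_add intϑ intφ, eq_fst ϑ hϑc.measurable, eq_snd φ hφm, hφν_eq]
      ring
  -- π-a.e. Fenchel-Young, and the main inequality
  have ae_good : ∀ π : Measure ((EuclideanSpace ℝ (Fin d)) × (EuclideanSpace ℝ (Fin d))), IsCoupling π μ ν →
      ∀ᵐ z : (EuclideanSpace ℝ (Fin d)) × (EuclideanSpace ℝ (Fin d)) ∂π, z.2 ∈ G := by
    intro π hπ
    rw [ae_iff]
    have : {z : (EuclideanSpace ℝ (Fin d)) × (EuclideanSpace ℝ (Fin d)) | ¬ z.2 ∈ G} = Prod.snd ⁻¹' Gᶜ := rfl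
    rw [this, ← Measure.map_apply measurable_snd hGm.compl, hπ.2]
    exact hGc
  have ae_FY : ∀ π : Measure ((EuclideanSpace ℝ (Fin d)) × (EuclideanSpace ℝ (Fin d))), IsCoupling π μ ν →
      ∀ᵐ z : (EuclideanSpace ℝ (Fin d)) × (EuclideanSpace ℝ (Fin d)) ∂π, ⟪z.1, z.2⟫ ≤ ϑ z.1 + φ z.2 := by
    intro π hπ
    filter_upwards [ae_good π hπ] with z hz
    have h := brenierPhi_ge hϑc hq hz z.1
    rw [← hφ_def] at h
    linarith
  have inner_le : ∀ π : Measure ((EuclideanSpace ℝ (Fin d)) × (EuclideanSpace ℝ (Fin d))), IsCoupling π μ ν →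
      ∫ z : (EuclideanSpace ℝ (Fin d)) × (EuclideanSpace ℝ (Fin d)), ⟪z.1, z.2⟫ ∂π ≤ K := by
    intro π hπ
    obtain ⟨hexp, hint, hint2, hval⟩ := coupling_facts π hπ
    calc ∫ z : (EuclideanSpace ℝ (Fin d)) × (EuclideanSpace ℝ (Fin d)), ⟪z.1, z.2⟫ ∂π ≤ ∫ z : (EuclideanSpace ℝ (Fin d)) × (EuclideanSpace ℝ (Fin d)), (ϑ z.1 + φ z.2) ∂π :=
          integral_mono_ae hint hint2 (ae_FY π hπ)
      _ = K := hval
  have main_ineq : ∀ π : Measure ((EuclideanSpace ℝ (Fin d)) × (EuclideanSpace ℝ (Fin d))), IsCoupling π μ ν →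
      ∫ x, ‖x - g x‖ ^ 2 / 2 ∂μ ≤ ∫ z : (EuclideanSpace ℝ (Fin d)) × (EuclideanSpace ℝ (Fin d)), ‖z.1 - z.2‖ ^ 2 / 2 ∂π := by
    intro π hπ
    rw [hdet_val, (coupling_facts π hπ).1]
    have := inner_le π hπ
    linarith
  -- the deterministic coupling
  set π₀ : Measure ((EuclideanSpace ℝ (Fin d)) × (EuclideanSpace ℝ (Fin d))) := μ.map (fun x => (x, g x)) with hπ₀_def
  have hpairm : Measurable (fun x : (EuclideanSpace ℝ (Fin d)) => (x, g x)) := measurable_id.prodMk hgm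
  have hπ₀ : IsCoupling π₀ μ ν := by
    constructor
    · rw [hπ₀_def, Measure.map_map measurable_fst hpairm]
      simp only [Function.comp_def]
      exact Measure.map_id
    · rw [hπ₀_def, Measure.map_map measurable_snd hpairm, ← hpush]
      rfl
  have hπ₀_val : ∫ z : (EuclideanSpace ℝ (Fin d)) × (EuclideanSpace ℝ (Fin d)), ‖z.1 - z.2‖ ^ 2 / 2 ∂π₀
      = ∫ x, ‖x - g x‖ ^ 2 / 2 ∂μ := by
    rw [hπ₀_def, integral_map hpairm.aemeasurable]
    exact (((continuous_fst.sub continuous_snd).norm.pow 2).div_const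
      2).aestronglyMeasurable
  constructor
  · -- optimal value
    apply le_antisymm
    · refine le_csInf ⟨_, ⟨π₀, hπ₀, hπ₀_val.symm⟩⟩ ?_
      rintro r ⟨π, hπ, rfl⟩
      exact main_ineq π hπ
    · apply csInf_le
      · refine ⟨∫ x, ‖x - g x‖ ^ 2 / 2 ∂μ, ?_⟩
        rintro r ⟨π, hπ, rfl⟩
        exact main_ineq π hπ
      · exact ⟨π₀, hπ₀, hπ₀_val.symm⟩
  · -- uniqueness
    intro π hπ hopt
    obtain ⟨hexp, hint, hint2, hval⟩ := coupling_facts π hπ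
    have hle : ∫ z : (EuclideanSpace ℝ (Fin d)) × (EuclideanSpace ℝ (Fin d)), ‖z.1 - z.2‖ ^ 2 / 2 ∂π ≤ ∫ x, ‖x - g x‖ ^ 2 / 2 ∂μ := by
      have := hopt π₀ hπ₀
      rwa [hπ₀_val] at this
    have heq : ∫ z : (EuclideanSpace ℝ (Fin d)) × (EuclideanSpace ℝ (Fin d)), ‖z.1 - z.2‖ ^ 2 / 2 ∂π = ∫ x, ‖x - g x‖ ^ 2 / 2 ∂μ :=
      le_antisymm hle (main_ineq π hπ)
    have hinner_eq : ∫ z : (EuclideanSpace ℝ (Fin d)) × (EuclideanSpace ℝ (Fin d)), ⟪z.1, z.2⟫ ∂π = K := by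
      rw [heq, hdet_val] at hexp
      linarith
    -- the defect function vanishes a.e.
    have hdefect : ∀ᵐ z : (EuclideanSpace ℝ (Fin d)) × (EuclideanSpace ℝ (Fin d)) ∂π, ϑ z.1 + φ z.2 - ⟪z.1, z.2⟫ = 0 := by
      have hnneg : 0 ≤ᵐ[π] fun z : (EuclideanSpace ℝ (Fin d)) × (EuclideanSpace ℝ (Fin d)) => ϑ z.1 + φ z.2 - ⟪z.1, z.2⟫ := by
        filter_upwards [ae_FY π hπ] with z hz
        simp only [Pi.zero_apply]
        linarith
      have hii : Integrable (fun z : (EuclideanSpace ℝ (Fin d)) × (EuclideanSpace ℝ (Fin d)) => ϑ z.1 + φ z.2 - ⟪z.1, z.2⟫) π :=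
        hint2.sub hint
      have hzero : ∫ z : (EuclideanSpace ℝ (Fin d)) × (EuclideanSpace ℝ (Fin d)), (ϑ z.1 + φ z.2 - ⟪z.1, z.2⟫) ∂π = 0 := by
        rw [integral_sub hint2 hint, hval, hinner_eq, sub_self]
      have := (integral_eq_zero_iff_of_nonneg_ae hnneg hii).mp hzero
      filter_upwards [this] with z hz
      exact hz
    -- a.e. differentiability of first coordinate
    have ae_diff_fst : ∀ᵐ z : (EuclideanSpace ℝ (Fin d)) × (EuclideanSpace ℝ (Fin d)) ∂π, DifferentiableAt ℝ ϑ z.1 := by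
      rw [ae_iff]
      have hDm : MeasurableSet {x : (EuclideanSpace ℝ (Fin d)) | DifferentiableAt ℝ ϑ x} :=
        measurableSet_of_differentiableAt ℝ ϑ
      have : {z : (EuclideanSpace ℝ (Fin d)) × (EuclideanSpace ℝ (Fin d)) | ¬ DifferentiableAt ℝ ϑ z.1}
          = Prod.fst ⁻¹' {x : (EuclideanSpace ℝ (Fin d)) | DifferentiableAt ℝ ϑ x}ᶜ := rfl
      rw [this, ← Measure.map_apply measurable_fst hDm.compl, hπ.1]
      exact ae_iff.1 hdiff
    -- conclude: a.e. z.2 = g z.1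
    have ae_eq_grad : ∀ᵐ z : (EuclideanSpace ℝ (Fin d)) × (EuclideanSpace ℝ (Fin d)) ∂π, z = (z.1, g z.1) := by
      filter_upwards [hdefect, ae_diff_fst, ae_good π hπ] with z hz hdz hzG
      have hsub : ∀ w : (EuclideanSpace ℝ (Fin d)), ϑ z.1 + ⟪z.2, w - z.1⟫ ≤ ϑ w := by
        intro w
        have h1 := brenierPhi_ge hϑc hq hzG w
        rw [← hφ_def] at h1
        have h2 : φ z.2 = ⟪z.1, z.2⟫ - ϑ z.1 := by linarith
        rw [h2] at h1
        have h3 : ⟪z.2, w - z.1⟫ = ⟪w, z.2⟫ - ⟪z.1, z.2⟫ := by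
          rw [inner_sub_right, real_inner_comm z.2 w, real_inner_comm z.2 z.1]
        rw [h3]
        linarith
      have := brenier_eq_gradient_of_subgradient ϑ hdz hsub
      rw [Prod.ext_iff]
      exact ⟨rfl, this⟩
    calc π = π.map id := Measure.map_id.symm
      _ = π.map (fun z : (EuclideanSpace ℝ (Fin d)) × (EuclideanSpace ℝ (Fin d)) => (z.1, g z.1)) := by
          apply Measure.map_congr
          filter_upwards [ae_eq_grad] with z hz
          simp [id, ← hz]
      _ = (π.map Prod.fst).map (fun x : (EuclideanSpace ℝ (Fin d)) => (x, g x)) := by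
          rw [Measure.map_map hpairm measurable_fst]
          rfl
      _ = μ.map (fun x : (EuclideanSpace ℝ (Fin d)) => (x, g x)) := by rw [hπ.1]
end

section
/- For every p ∈ [1,∞) and all Borel probability measures μ and ν on ℝ with finite p-th moments, the p-Wasserstein distance equals the L^p distance between quantile functions: W_p(μ,ν) = ( ∫₀¹ |Q_μ(t) − Q_ν(t)|^p dt )^{1/p}. -/
open MeasureTheory Set

/-- The quantile function `Q_μ(t) = inf { x : F_μ(x) ≥ t }` of a measure on `ℝ`. -/
noncomputable def quantile (μ : Measure ℝ) (t : ℝ) : ℝ :=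
  sInf {x : ℝ | t ≤ (μ (Iic x)).toReal}

open Filter Topology
open scoped ENNReal Classical

noncomputable section

namespace WQAux

/-- The uniform measure on `(0,1)`. -/
def U : Measure ℝ := volume.restrict (Ioo 0 1)

instance : IsProbabilityMeasure U :=
  ⟨by rw [U, Measure.restrict_apply_univ, Real.volume_Ioo]; norm_num⟩

lemma quantile_le_iff {μ : Measure ℝ} [IsProbabilityMeasure μ] {t : ℝ} (ht : t ∈ Ioo (0:ℝ) 1)
    {x : ℝ} : quantile μ t ≤ x ↔ ENNReal.ofReal t ≤ μ (Iic x) := by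
  obtain ⟨ht0, ht1⟩ := ht
  set S := {y : ℝ | t ≤ (μ (Iic y)).toReal} with hS
  have hmemS : ∀ y : ℝ, y ∈ S ↔ ENNReal.ofReal t ≤ μ (Iic y) := fun y =>
    (ENNReal.ofReal_le_iff_le_toReal (measure_ne_top μ _)).symm
  have hne : S.Nonempty := by
    have h1 : ENNReal.ofReal t < μ univ := by
      rw [measure_univ]; exact ENNReal.ofReal_lt_one.2 ht1
    obtain ⟨y, hy⟩ := ((tendsto_order.1 (tendsto_measure_Iic_atTop μ)).1 _ h1).exists
    exact ⟨y, (hmemS y).2 hy.le⟩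
  have hbdd : BddBelow S := by
    have h0 : Tendsto (fun n : ℕ => μ (Iic (-(n:ℝ)))) atTop
        (𝓝 (μ (⋂ n : ℕ, Iic (-(n:ℝ))))) := by
      refine tendsto_measure_iInter_atTop (fun n => measurableSet_Iic.nullMeasurableSet)
        (fun m n hmn => Iic_subset_Iic.2 (neg_le_neg (Nat.cast_le.2 hmn))) ⟨0, measure_ne_top μ _⟩
    have hIempty : (⋂ n : ℕ, Iic (-(n:ℝ))) = ∅ := by
      ext y
      simp only [mem_iInter, mem_Iic, mem_empty_iff_false, iff_false, not_forall, not_le]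
      obtain ⟨n, hn⟩ := exists_nat_gt (-y)
      exact ⟨n, by linarith⟩
    rw [hIempty, measure_empty] at h0
    have hpos : (0 : ℝ≥0∞) < ENNReal.ofReal t := ENNReal.ofReal_pos.2 ht0
    obtain ⟨n, hn⟩ := (h0.eventually_lt_const hpos).exists
    refine ⟨-(n:ℝ), fun s hs => ?_⟩
    by_contra hcon
    push_neg at hcon
    have h' : ENNReal.ofReal t ≤ μ (Iic (-(n:ℝ))) :=
      ((hmemS s).1 hs).trans (measure_mono (Iic_subset_Iic.2 hcon.le))
    exact absurd hn (not_lt.2 h')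
  have hq : sInf S ∈ S := by
    rw [hmemS]
    have hseq : Tendsto (fun n : ℕ => μ (Iic (sInf S + 1/(n+1)))) atTop
        (𝓝 (μ (⋂ n : ℕ, Iic (sInf S + 1/(n+1))))) := by
      refine tendsto_measure_iInter_atTop (fun n => measurableSet_Iic.nullMeasurableSet)
        (fun m n hmn => Iic_subset_Iic.2 ?_) ⟨0, measure_ne_top μ _⟩
      have : 1/((n:ℝ)+1) ≤ 1/((m:ℝ)+1) := by
        apply one_div_le_one_div_of_le (by positivity)
        have := (Nat.cast_le (α := ℝ)).2 hmn
        linarith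
      linarith
    have hI : (⋂ n : ℕ, Iic (sInf S + 1/(n+1))) = Iic (sInf S) := by
      ext y
      simp only [mem_iInter, mem_Iic]
      constructor
      · intro h
        by_contra hy
        push_neg at hy
        obtain ⟨n, hn⟩ := exists_nat_one_div_lt (sub_pos.2 hy)
        have := h n
        linarith
      · intro h n
        have : (0:ℝ) < 1/((n:ℝ)+1) := by positivity
        linarith
    rw [hI] at hseq
    refine ge_of_tendsto hseq (Eventually.of_forall fun n => ?_)
    have hlt : sInf S < sInf S + 1/((n:ℝ)+1) := by
      have : (0:ℝ) < 1/((n:ℝ)+1) := by positivity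
      linarith
    obtain ⟨s, hsS, hs⟩ := (csInf_lt_iff hbdd hne).1 hlt
    exact ((hmemS s).1 hsS).trans (measure_mono (Iic_subset_Iic.2 hs.le))
  constructor
  · intro h
    exact ((hmemS _).1 hq).trans (measure_mono (Iic_subset_Iic.2 h))
  · intro h
    exact csInf_le hbdd ((hmemS x).2 h)

lemma measurable_qmod (μ : Measure ℝ) [IsProbabilityMeasure μ] :
    Measurable ((Ioo (0:ℝ) 1).piecewise (quantile μ) fun _ => (0:ℝ)) := by
  apply measurable_of_Iic
  intro x
  have hset : (Ioo (0:ℝ) 1).piecewise (quantile μ) (fun _ => (0:ℝ)) ⁻¹' (Iic x)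
      = (Ioo (0:ℝ) 1 ∩ Iic ((μ (Iic x)).toReal)) ∪ ((Ioo (0:ℝ) 1)ᶜ ∩ {_t : ℝ | (0:ℝ) ≤ x}) := by
    ext t
    by_cases ht : t ∈ Ioo (0:ℝ) 1
    · simp only [mem_preimage, Set.piecewise_eq_of_mem _ _ _ ht, mem_union, mem_inter_iff, ht,
        true_and, mem_compl_iff, not_true_eq_false, false_and, or_false, mem_Iic]
      rw [quantile_le_iff ht, ENNReal.ofReal_le_iff_le_toReal (measure_ne_top μ _)]
    · simp only [mem_preimage, Set.piecewise_eq_of_notMem _ _ _ ht, mem_union, mem_inter_iff, ht,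
        false_and, false_or, mem_compl_iff, not_false_eq_true, true_and, mem_Iic, mem_setOf_eq]
  rw [hset]
  refine (measurableSet_Ioo.inter measurableSet_Iic).union (measurableSet_Ioo.compl.inter ?_)
  rcases le_or_gt 0 x with h | h
  · convert MeasurableSet.univ
    ext t; simp [h]
  · convert MeasurableSet.empty
    ext t; simp [h, not_le.2 h]

lemma aemeasurable_quantile (μ : Measure ℝ) [IsProbabilityMeasure μ] :
    AEMeasurable (quantile μ) U := by
  refine (measurable_qmod μ).aemeasurable.congr ?_
  rw [U]
  refine (ae_restrict_iff' measurableSet_Ioo).2 (Eventually.of_forall fun t ht => ?_)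
  exact Set.piecewise_eq_of_mem _ _ _ ht

lemma volume_Ioc_inter {u v : ℝ} (hu : 0 ≤ u) (hv : v ≤ 1) :
    volume (Ioc u v ∩ Ioo (0:ℝ) 1) = ENNReal.ofReal (v - u) := by
  rcases le_or_gt v u with h | h
  · rw [Ioc_eq_empty (not_lt.2 h), empty_inter, measure_empty]
    exact (ENNReal.ofReal_eq_zero.2 (by linarith)).symm
  · apply le_antisymm
    · calc volume (Ioc u v ∩ Ioo (0:ℝ) 1) ≤ volume (Icc u v) :=
            measure_mono (inter_subset_left.trans Ioc_subset_Icc_self)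
        _ = ENNReal.ofReal (v - u) := Real.volume_Icc
    · calc ENNReal.ofReal (v - u) = volume (Ioo u v) := Real.volume_Ioo.symm
        _ ≤ volume (Ioc u v ∩ Ioo (0:ℝ) 1) := measure_mono fun s hs =>
            ⟨⟨hs.1, hs.2.le⟩, lt_of_le_of_lt hu hs.1, lt_of_lt_of_le hs.2 hv⟩

lemma toReal_le_one {μ : Measure ℝ} [IsProbabilityMeasure μ] (s : Set ℝ) :
    (μ s).toReal ≤ 1 := by
  simpa using ENNReal.toReal_mono ENNReal.one_ne_top prob_le_one

lemma map_quantile (μ : Measure ℝ) [IsProbabilityMeasure μ] :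
    Measure.map (quantile μ) U = μ := by
  haveI : IsProbabilityMeasure (Measure.map (quantile μ) U) :=
    Measure.isProbabilityMeasure_map (aemeasurable_quantile μ)
  refine Measure.ext_of_Iic _ _ fun x => ?_
  rw [Measure.map_apply_of_aemeasurable (aemeasurable_quantile μ) measurableSet_Iic,
    U, Measure.restrict_apply' measurableSet_Ioo]
  have hset : quantile μ ⁻¹' Iic x ∩ Ioo (0:ℝ) 1
      = Ioc (0:ℝ) ((μ (Iic x)).toReal) ∩ Ioo 0 1 := by
    ext t
    simp only [mem_inter_iff, mem_preimage, mem_Iic, mem_Ioc, mem_Ioo]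
    constructor
    · rintro ⟨h1, h2⟩
      exact ⟨⟨h2.1, (ENNReal.ofReal_le_iff_le_toReal (measure_ne_top μ _)).1
        ((quantile_le_iff ⟨h2.1, h2.2⟩).1 h1)⟩, h2⟩
    · rintro ⟨h1, h2⟩
      exact ⟨(quantile_le_iff ⟨h2.1, h2.2⟩).2
        ((ENNReal.ofReal_le_iff_le_toReal (measure_ne_top μ _)).2 h1.2), h2⟩
  rw [hset, volume_Ioc_inter le_rfl (toReal_le_one _), sub_zero,
    ENNReal.ofReal_toReal (measure_ne_top μ _)]


section Coupling

variable {μ ν : Measure ℝ} [IsProbabilityMeasure μ] [IsProbabilityMeasure ν]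

/-- The quantile (comonotone) coupling. -/
def qcoupling (μ ν : Measure ℝ) : Measure (ℝ × ℝ) :=
  Measure.map (fun t => (quantile μ t, quantile ν t)) U

lemma aemeasurable_qpair (μ ν : Measure ℝ) [IsProbabilityMeasure μ] [IsProbabilityMeasure ν] :
    AEMeasurable (fun t => (quantile μ t, quantile ν t)) U :=
  (aemeasurable_quantile μ).prodMk (aemeasurable_quantile ν)

lemma isCoupling_qcoupling : IsCoupling (qcoupling μ ν) μ ν := by
  constructor
  · rw [qcoupling, AEMeasurable.map_map_of_aemeasurable measurable_fst.aemeasurable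
      (aemeasurable_qpair μ ν)]
    exact map_quantile μ
  · rw [qcoupling, AEMeasurable.map_map_of_aemeasurable measurable_snd.aemeasurable
      (aemeasurable_qpair μ ν)]
    exact map_quantile ν

lemma qcoupling_quadrant (μ ν : Measure ℝ) [IsProbabilityMeasure μ] [IsProbabilityMeasure ν]
    (c d : ℝ) : qcoupling μ ν (Ioi c ×ˢ Iic d) = ν (Iic d) - μ (Iic c) := by
  rw [qcoupling, Measure.map_apply_of_aemeasurable (aemeasurable_qpair μ ν)
    (measurableSet_Ioi.prod measurableSet_Iic), U, Measure.restrict_apply' measurableSet_Ioo]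
  have hset : (fun t => (quantile μ t, quantile ν t)) ⁻¹' (Ioi c ×ˢ Iic d) ∩ Ioo (0:ℝ) 1
      = Ioc ((μ (Iic c)).toReal) ((ν (Iic d)).toReal) ∩ Ioo 0 1 := by
    ext t
    simp only [mem_inter_iff, mem_preimage, mem_prod, mem_Ioi, mem_Iic, mem_Ioc, mem_Ioo]
    constructor
    · rintro ⟨⟨h1, h2⟩, h3⟩
      refine ⟨⟨?_, (ENNReal.ofReal_le_iff_le_toReal (measure_ne_top ν _)).1
        ((quantile_le_iff h3).1 h2)⟩, h3⟩
      by_contra hle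
      push_neg at hle
      exact absurd ((quantile_le_iff h3).2
        ((ENNReal.ofReal_le_iff_le_toReal (measure_ne_top μ _)).2 hle)) (not_le.2 h1)
    · rintro ⟨⟨h1, h2⟩, h3⟩
      refine ⟨⟨?_, (quantile_le_iff h3).2
        ((ENNReal.ofReal_le_iff_le_toReal (measure_ne_top ν _)).2 h2)⟩, h3⟩
      by_contra hle
      push_neg at hle
      have := (ENNReal.ofReal_le_iff_le_toReal (measure_ne_top μ _)).1 ((quantile_le_iff h3).1 hle)
      linarith
  rw [hset, volume_Ioc_inter ENNReal.toReal_nonneg (toReal_le_one _),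
    ENNReal.ofReal_sub _ ENNReal.toReal_nonneg, ENNReal.ofReal_toReal (measure_ne_top ν _),
    ENNReal.ofReal_toReal (measure_ne_top μ _)]

lemma qcoupling_quadrant' (μ ν : Measure ℝ) [IsProbabilityMeasure μ] [IsProbabilityMeasure ν]
    (c d : ℝ) : qcoupling μ ν (Iic d ×ˢ Ioi c) = μ (Iic d) - ν (Iic c) := by
  have h1 : qcoupling μ ν (Iic d ×ˢ Ioi c) = qcoupling ν μ (Ioi c ×ˢ Iic d) := by
    rw [qcoupling, qcoupling,
      Measure.map_apply_of_aemeasurable (aemeasurable_qpair μ ν)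
        (measurableSet_Iic.prod measurableSet_Ioi),
      Measure.map_apply_of_aemeasurable (aemeasurable_qpair ν μ)
        (measurableSet_Ioi.prod measurableSet_Iic)]
    congr 1
    ext t
    simp only [mem_preimage, mem_prod, mem_Iic, mem_Ioi]
    exact and_comm
  rw [h1, qcoupling_quadrant]

lemma isProbabilityMeasure_coupling {π : Measure (ℝ × ℝ)} (hπ : IsCoupling π μ ν) :
    IsProbabilityMeasure π := by
  constructor
  have h := congrArg (fun m : Measure ℝ => m univ) hπ.1
  simp only [Measure.map_apply measurable_fst MeasurableSet.univ, preimage_univ,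
    measure_univ] at h
  exact h

lemma coupling_quadrant {π : Measure (ℝ × ℝ)} (hπ : IsCoupling π μ ν) (c d : ℝ) :
    ν (Iic d) - μ (Iic c) ≤ π (Ioi c ×ˢ Iic d) := by
  have h1 : π (Iic c ×ˢ Iic d) ≤ μ (Iic c) := by
    rw [← hπ.1, Measure.map_apply measurable_fst measurableSet_Iic]
    exact measure_mono fun z hz => hz.1
  have h2 : ν (Iic d) ≤ π (Iic c ×ˢ Iic d) + π (Ioi c ×ˢ Iic d) := by
    rw [← hπ.2, Measure.map_apply measurable_snd measurableSet_Iic]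
    refine (measure_mono fun z hz => ?_).trans (measure_union_le _ _)
    rcases le_or_gt z.1 c with h | h
    · exact Or.inl ⟨h, hz⟩
    · exact Or.inr ⟨h, hz⟩
  exact tsub_le_iff_left.2 (h2.trans (add_le_add h1 le_rfl))

lemma coupling_swap {π : Measure (ℝ × ℝ)} (hπ : IsCoupling π μ ν) :
    IsCoupling (Measure.map Prod.swap π) ν μ := by
  constructor
  · rw [Measure.map_map measurable_fst measurable_swap]
    exact hπ.2
  · rw [Measure.map_map measurable_snd measurable_swap]
    exact hπ.1

lemma coupling_quadrant' {π : Measure (ℝ × ℝ)} (hπ : IsCoupling π μ ν) (c d : ℝ) :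
    μ (Iic d) - ν (Iic c) ≤ π (Iic d ×ˢ Ioi c) := by
  have h := coupling_quadrant (coupling_swap hπ) c d
  rw [Measure.map_apply measurable_swap (measurableSet_Ioi.prod measurableSet_Iic)] at h
  have hset : Prod.swap ⁻¹' (Ioi c ×ˢ Iic d) = (Iic d ×ˢ Ioi c : Set (ℝ × ℝ)) := by
    ext z
    simp only [mem_preimage, Prod.fst_swap, Prod.snd_swap, mem_prod, mem_Ioi, mem_Iic]
    exact and_comm
  rwa [hset] at h

end Coupling

section Swap

variable {W : Type*} [MeasurableSpace W]

lemma lintegral_quadrant_swap (η : Measure W) [SFinite η] (ρ : Measure (ℝ × ℝ))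
    [IsFiniteMeasure ρ] {c d : W → ℝ} (hc : Measurable c) (hd : Measurable d) (w8 : ℝ≥0∞) :
    ∫⁻ z, (∫⁻ w, w8 * ((Ioi (c w) ×ˢ Iic (d w)).indicator 1 z
        + (Iic (d w) ×ˢ Ioi (c w)).indicator 1 z) ∂η) ∂ρ
      = ∫⁻ w, w8 * (ρ (Ioi (c w) ×ˢ Iic (d w)) + ρ (Iic (d w) ×ˢ Ioi (c w))) ∂η := by
  have hA : MeasurableSet {q : (ℝ × ℝ) × W | c q.2 < q.1.1 ∧ q.1.2 ≤ d q.2} :=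
    (measurableSet_lt (hc.comp measurable_snd) measurable_fst.fst).inter
      (measurableSet_le measurable_fst.snd (hd.comp measurable_snd))
  have hB : MeasurableSet {q : (ℝ × ℝ) × W | q.1.1 ≤ d q.2 ∧ c q.2 < q.1.2} :=
    (measurableSet_le measurable_fst.fst (hd.comp measurable_snd)).inter
      (measurableSet_lt (hc.comp measurable_snd) measurable_fst.snd)
  have hfun : ∀ (z : ℝ × ℝ) (w : W),
      w8 * ((Ioi (c w) ×ˢ Iic (d w)).indicator 1 z + (Iic (d w) ×ˢ Ioi (c w)).indicator 1 z)
      = w8 * ({q : (ℝ × ℝ) × W | c q.2 < q.1.1 ∧ q.1.2 ≤ d q.2}.indicator 1 (z, w)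
          + {q : (ℝ × ℝ) × W | q.1.1 ≤ d q.2 ∧ c q.2 < q.1.2}.indicator 1 (z, w)) := by
    intro z w
    simp only [Set.indicator_apply, Set.mem_prod, mem_Ioi, mem_Iic, mem_setOf_eq, Pi.one_apply]
  have hmeas : AEMeasurable (Function.uncurry fun (z : ℝ × ℝ) (w : W) =>
      w8 * ({q : (ℝ × ℝ) × W | c q.2 < q.1.1 ∧ q.1.2 ≤ d q.2}.indicator 1 (z, w)
          + {q : (ℝ × ℝ) × W | q.1.1 ≤ d q.2 ∧ c q.2 < q.1.2}.indicator 1 (z, w)))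
      (ρ.prod η) := by
    refine Measurable.aemeasurable ?_
    have : (Function.uncurry fun (z : ℝ × ℝ) (w : W) =>
        w8 * ({q : (ℝ × ℝ) × W | c q.2 < q.1.1 ∧ q.1.2 ≤ d q.2}.indicator 1 (z, w)
          + {q : (ℝ × ℝ) × W | q.1.1 ≤ d q.2 ∧ c q.2 < q.1.2}.indicator 1 (z, w)))
        = fun q : (ℝ × ℝ) × W =>
        w8 * ({q : (ℝ × ℝ) × W | c q.2 < q.1.1 ∧ q.1.2 ≤ d q.2}.indicator 1 q
          + {q : (ℝ × ℝ) × W | q.1.1 ≤ d q.2 ∧ c q.2 < q.1.2}.indicator 1 q) := by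
      funext q
      rfl
    rw [this]
    exact ((measurable_one.indicator hA).add (measurable_one.indicator hB)).const_mul w8
  simp_rw [hfun]
  rw [lintegral_lintegral_swap hmeas]
  refine lintegral_congr fun w => ?_
  have h1 : ∀ z : ℝ × ℝ,
      w8 * ({q : (ℝ × ℝ) × W | c q.2 < q.1.1 ∧ q.1.2 ≤ d q.2}.indicator 1 (z, w)
          + {q : (ℝ × ℝ) × W | q.1.1 ≤ d q.2 ∧ c q.2 < q.1.2}.indicator 1 (z, w))
      = w8 * ((Ioi (c w) ×ˢ Iic (d w)).indicator 1 z
          + (Iic (d w) ×ˢ Ioi (c w)).indicator 1 z) := fun z => (hfun z w).symm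
  calc ∫⁻ z, w8 * ({q : (ℝ × ℝ) × W | c q.2 < q.1.1 ∧ q.1.2 ≤ d q.2}.indicator 1 (z, w)
          + {q : (ℝ × ℝ) × W | q.1.1 ≤ d q.2 ∧ c q.2 < q.1.2}.indicator 1 (z, w)) ∂ρ
      = ∫⁻ z, w8 * ((Ioi (c w) ×ˢ Iic (d w)).indicator 1 z
          + (Iic (d w) ×ˢ Ioi (c w)).indicator 1 z) ∂ρ := lintegral_congr h1
    _ = w8 * (ρ (Ioi (c w) ×ˢ Iic (d w)) + ρ (Iic (d w) ×ˢ Ioi (c w))) := by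
        rw [lintegral_const_mul (f := fun z : ℝ × ℝ =>
            (Ioi (c w) ×ˢ Iic (d w)).indicator (1 : ℝ × ℝ → ℝ≥0∞) z
              + (Iic (d w) ×ˢ Ioi (c w)).indicator 1 z) _ ((measurable_one.indicator
            ((measurableSet_Ioi.prod measurableSet_Iic))).add (measurable_one.indicator
            ((measurableSet_Iic.prod measurableSet_Ioi)))),
          lintegral_add_left (measurable_one.indicator
            (measurableSet_Ioi.prod measurableSet_Iic)),
          lintegral_indicator_one (measurableSet_Ioi.prod measurableSet_Iic),
          lintegral_indicator_one (measurableSet_Iic.prod measurableSet_Ioi)]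

end Swap

section KernelOne

lemma kernel_one (x y : ℝ) :
    ENNReal.ofReal |x - y| = ∫⁻ a : ℝ, (1:ℝ≥0∞) * ((Ioi a ×ˢ Iic a).indicator 1 (x, y)
      + (Iic a ×ˢ Ioi a).indicator 1 (x, y)) := by
  have hfun : (fun a : ℝ => (1:ℝ≥0∞) * ((Ioi a ×ˢ Iic a).indicator 1 (x, y)
      + (Iic a ×ˢ Ioi a).indicator 1 (x, y)))
      = fun a : ℝ => (Ico y x).indicator 1 a + (Ico x y).indicator 1 a := by
    funext a
    simp only [one_mul, Set.indicator_apply, Set.mem_prod, mem_Ioi, mem_Iic, mem_Ico,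
      Pi.one_apply]
    congr 1
    exact if_congr and_comm rfl rfl
  rw [hfun, lintegral_add_left (measurable_one.indicator measurableSet_Ico),
    lintegral_indicator_one measurableSet_Ico, lintegral_indicator_one measurableSet_Ico,
    Real.volume_Ico, Real.volume_Ico]
  rcases le_total y x with h | h
  · rw [abs_of_nonneg (sub_nonneg.2 h),
      ENNReal.ofReal_of_nonpos (show y - x ≤ 0 by linarith), add_zero]
  · rw [abs_of_nonpos (sub_nonpos.2 h), neg_sub,
      ENNReal.ofReal_of_nonpos (show x - y ≤ 0 by linarith), zero_add]

lemma rep_one (ρ : Measure (ℝ × ℝ)) [IsFiniteMeasure ρ] :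
    ∫⁻ z, ENNReal.ofReal |z.1 - z.2| ∂ρ
      = ∫⁻ a : ℝ, (1:ℝ≥0∞) * (ρ (Ioi a ×ˢ Iic a) + ρ (Iic a ×ˢ Ioi a)) := by
  have h1 : ∫⁻ z, ENNReal.ofReal |z.1 - z.2| ∂ρ
      = ∫⁻ z, (∫⁻ a : ℝ, (1:ℝ≥0∞) * ((Ioi a ×ˢ Iic a).indicator 1 z
          + (Iic a ×ˢ Ioi a).indicator 1 z)) ∂ρ := by
    refine lintegral_congr fun z => ?_
    simpa using kernel_one z.1 z.2
  rw [h1]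
  exact lintegral_quadrant_swap volume ρ measurable_id measurable_id 1

end KernelOne

section KernelGt

lemma measurable_term {p : ℝ} (hp : 1 < p) (x y : ℝ) :
    Measurable fun w : ℝ × ℝ => ENNReal.ofReal p *
      (Ioi (w.1 + w.2 ^ (1/(p-1))) ×ˢ Iic w.1).indicator (1 : ℝ × ℝ → ℝ≥0∞) (x, y) := by
  have hrw : (fun w : ℝ × ℝ => ENNReal.ofReal p *
      (Ioi (w.1 + w.2 ^ (1/(p-1))) ×ˢ Iic w.1).indicator (1 : ℝ × ℝ → ℝ≥0∞) (x, y))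
      = fun w : ℝ × ℝ => ENNReal.ofReal p *
      ({v : ℝ × ℝ | v.1 + v.2 ^ (1/(p-1)) < x ∧ y ≤ v.1}).indicator 1 w := by
    funext w
    simp only [Set.indicator_apply, Set.mem_prod, mem_Ioi, mem_Iic, mem_setOf_eq, Pi.one_apply]
  rw [hrw]
  refine (measurable_one.indicator ?_).const_mul _
  refine (measurableSet_lt (measurable_fst.add ?_) measurable_const).inter
    (measurableSet_le measurable_const measurable_fst)
  exact (Real.continuous_rpow_const (le_of_lt (one_div_pos.2 (by linarith)))).measurable.comp
    measurable_snd

lemma half {p : ℝ} (hp : 1 < p) {x y : ℝ} (hxy : y ≤ x) :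
    (∫⁻ w : ℝ × ℝ, ENNReal.ofReal p *
        (Ioi (w.1 + w.2 ^ (1/(p-1))) ×ˢ Iic w.1).indicator 1 (x, y)
      ∂(volume.prod (volume.restrict (Ioi 0))))
      = ENNReal.ofReal ((x - y) ^ p) := by
  have hp0 : (0:ℝ) < p := by linarith
  have hp1 : (0:ℝ) < p - 1 := by linarith
  rw [MeasureTheory.lintegral_prod _ (measurable_term hp x y).aemeasurable]
  have hinner : ∀ a : ℝ, (∫⁻ s in Ioi (0:ℝ), ENNReal.ofReal p *
      (Ioi (a + s ^ (1/(p-1))) ×ˢ Iic a).indicator 1 (x, y))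
      = (Ico y x).indicator (fun b => ENNReal.ofReal (p * (x - b) ^ (p-1))) a := by
    intro a
    by_cases hya : y ≤ a
    · by_cases hax : a < x
      · have hset : ∀ s ∈ Ioi (0:ℝ), (ENNReal.ofReal p *
            (Ioi (a + s ^ (1/(p-1))) ×ˢ Iic a).indicator 1 (x, y))
            = (Iio ((x - a) ^ (p-1))).indicator (fun _ => ENNReal.ofReal p) s := by
          intro s hs
          rw [mem_Ioi] at hs
          have hiff : (a + s ^ (1/(p-1)) < x ∧ y ≤ a) ↔ s < (x - a) ^ (p-1) := by
            constructor
            · rintro ⟨h1, -⟩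
              have h2 : s ^ (1/(p-1)) < x - a := by linarith
              rw [one_div] at h2
              exact (Real.rpow_inv_lt_iff_of_pos hs.le (by linarith) hp1).1 h2
            · intro h
              refine ⟨?_, hya⟩
              have h2 : s ^ (1/(p-1)) < x - a := by
                rw [one_div]
                exact (Real.rpow_inv_lt_iff_of_pos hs.le (by linarith) hp1).2 h
              linarith
          simp only [Set.indicator_apply, Set.mem_prod, mem_Ioi, mem_Iic, mem_Iio,
            Pi.one_apply, mul_ite, mul_one, mul_zero]
          exact if_congr hiff rfl rfl
        rw [setLIntegral_congr_fun measurableSet_Ioi hset,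
          lintegral_indicator measurableSet_Iio, Measure.restrict_restrict measurableSet_Iio,
          setLIntegral_const]
        have hIoo : Iio ((x - a) ^ (p-1)) ∩ Ioi (0:ℝ) = Ioo 0 ((x - a) ^ (p-1)) := by
          ext s
          simp only [mem_inter_iff, mem_Iio, mem_Ioi, mem_Ioo]
          exact and_comm
        rw [hIoo, Real.volume_Ioo, sub_zero]
        rw [Set.indicator_of_mem (mem_Ico.2 ⟨hya, hax⟩), ENNReal.ofReal_mul hp0.le]
      · push_neg at hax
        have hset : ∀ s ∈ Ioi (0:ℝ), (ENNReal.ofReal p *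
            (Ioi (a + s ^ (1/(p-1))) ×ˢ Iic a).indicator 1 (x, y)) = 0 := by
          intro s hs
          rw [mem_Ioi] at hs
          have hnn : (0:ℝ) ≤ s ^ (1/(p-1)) := Real.rpow_nonneg hs.le _
          have hnot : (x, y) ∉ Ioi (a + s ^ (1/(p-1))) ×ˢ Iic a := by
            rintro ⟨h1, -⟩
            rw [mem_Ioi] at h1
            linarith
          rw [Set.indicator_of_notMem hnot, mul_zero]
        rw [setLIntegral_congr_fun measurableSet_Ioi hset,
          lintegral_zero, Set.indicator_of_notMem (fun hmem => absurd hmem.2 (not_lt.2 hax))]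
    · have hset : ∀ s ∈ Ioi (0:ℝ), (ENNReal.ofReal p *
          (Ioi (a + s ^ (1/(p-1))) ×ˢ Iic a).indicator 1 (x, y)) = 0 := by
        intro s hs
        have hnot : (x, y) ∉ Ioi (a + s ^ (1/(p-1))) ×ˢ Iic a := by
          rintro ⟨-, h2⟩
          rw [mem_Iic] at h2
          exact hya h2
        rw [Set.indicator_of_notMem hnot, mul_zero]
      rw [setLIntegral_congr_fun measurableSet_Ioi hset,
        lintegral_zero, Set.indicator_of_notMem (fun hmem => hya hmem.1)]
  rw [lintegral_congr hinner, lintegral_indicator measurableSet_Ico]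
  have hcont : Continuous fun b : ℝ => p * (x - b) ^ (p - 1) := by
    apply continuous_const.mul
    apply Continuous.rpow_const (continuous_const.sub continuous_id)
    intro b
    exact Or.inr (by linarith)
  have hint : IntegrableOn (fun b : ℝ => p * (x - b) ^ (p - 1)) (Ico y x) volume :=
    (hcont.integrableOn_Icc).mono_set Ico_subset_Icc_self
  have hnn : 0 ≤ᵐ[volume.restrict (Ico y x)] fun b : ℝ => p * (x - b) ^ (p - 1) := by
    refine (ae_restrict_iff' measurableSet_Ico).2 (Eventually.of_forall fun b hb => ?_)
    exact mul_nonneg hp0.le (Real.rpow_nonneg (by linarith [hb.2]) _)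
  rw [← ofReal_integral_eq_lintegral_ofReal hint hnn]
  congr 1
  have h1 : ∫ b in Ico y x, p * (x - b) ^ (p - 1)
      = ∫ b in Ioc y x, p * (x - b) ^ (p - 1) := by
    rw [integral_Ico_eq_integral_Ioo, ← integral_Ioc_eq_integral_Ioo]
  rw [h1, ← intervalIntegral.integral_of_le hxy, intervalIntegral.integral_const_mul,
    intervalIntegral.integral_comp_sub_left (fun u : ℝ => u ^ (p-1)) x, sub_self,
    integral_rpow (Or.inl (by linarith)),
    Real.zero_rpow (by linarith : p - 1 + 1 ≠ 0)]
  have hpe : p - 1 + 1 = p := by ring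
  rw [hpe, sub_zero, mul_comm, div_mul_cancel₀ _ (by linarith : p ≠ 0)]

lemma half_zero {p : ℝ} (hp : 1 < p) {x y : ℝ} (hxy : y ≤ x) :
    (∫⁻ w : ℝ × ℝ, ENNReal.ofReal p *
        (Ioi (w.1 + w.2 ^ (1/(p-1))) ×ˢ Iic w.1).indicator 1 (y, x)
      ∂(volume.prod (volume.restrict (Ioi 0)))) = 0 := by
  rw [MeasureTheory.lintegral_prod _ (measurable_term hp y x).aemeasurable]
  have hinner : ∀ a : ℝ, (∫⁻ s in Ioi (0:ℝ), ENNReal.ofReal p *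
      (Ioi (a + s ^ (1/(p-1))) ×ˢ Iic a).indicator 1 (y, x)) = 0 := by
    intro a
    have hset : ∀ s ∈ Ioi (0:ℝ), (ENNReal.ofReal p *
        (Ioi (a + s ^ (1/(p-1))) ×ˢ Iic a).indicator 1 (y, x)) = 0 := by
      intro s hs
      rw [mem_Ioi] at hs
      have hpos : 0 < s ^ (1/(p-1)) := Real.rpow_pos_of_pos hs _
      have hnot : (y, x) ∉ Ioi (a + s ^ (1/(p-1))) ×ˢ Iic a := by
        rintro ⟨h1, h2⟩
        rw [mem_Ioi] at h1
        rw [mem_Iic] at h2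
        linarith
      rw [Set.indicator_of_notMem hnot, mul_zero]
    rw [setLIntegral_congr_fun measurableSet_Ioi hset, lintegral_zero]
  rw [lintegral_congr hinner, lintegral_zero]

lemma kernel_gt {p : ℝ} (hp : 1 < p) (x y : ℝ) :
    ENNReal.ofReal (|x - y| ^ p)
      = ∫⁻ w : ℝ × ℝ, ENNReal.ofReal p *
          ((Ioi (w.1 + w.2 ^ (1/(p-1))) ×ˢ Iic w.1).indicator 1 (x, y)
           + (Iic w.1 ×ˢ Ioi (w.1 + w.2 ^ (1/(p-1)))).indicator 1 (x, y))
        ∂(volume.prod (volume.restrict (Ioi 0))) := by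
  have hdist : ∀ w : ℝ × ℝ, ENNReal.ofReal p *
      ((Ioi (w.1 + w.2 ^ (1/(p-1))) ×ˢ Iic w.1).indicator 1 (x, y)
       + (Iic w.1 ×ˢ Ioi (w.1 + w.2 ^ (1/(p-1)))).indicator 1 (x, y))
      = ENNReal.ofReal p * (Ioi (w.1 + w.2 ^ (1/(p-1))) ×ˢ Iic w.1).indicator 1 (x, y)
       + ENNReal.ofReal p * (Ioi (w.1 + w.2 ^ (1/(p-1))) ×ˢ Iic w.1).indicator 1 (y, x) := by
    intro w
    rw [mul_add]
    congr 1
    congr 1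
    simp only [Set.indicator_apply, Set.mem_prod, mem_Ioi, mem_Iic, Pi.one_apply]
    exact if_congr and_comm rfl rfl
  rw [lintegral_congr hdist, lintegral_add_left (measurable_term hp x y)]
  rcases le_total y x with h | h
  · rw [half hp h, half_zero hp h, add_zero, abs_of_nonneg (sub_nonneg.2 h)]
  · rw [half hp h, half_zero hp h, zero_add, abs_of_nonpos (sub_nonpos.2 h), neg_sub]

lemma rep_gt {p : ℝ} (hp : 1 < p) (ρ : Measure (ℝ × ℝ)) [IsFiniteMeasure ρ] :
    ∫⁻ z, ENNReal.ofReal (|z.1 - z.2| ^ p) ∂ρ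
      = ∫⁻ w : ℝ × ℝ, ENNReal.ofReal p *
          (ρ (Ioi (w.1 + w.2 ^ (1/(p-1))) ×ˢ Iic w.1)
            + ρ (Iic w.1 ×ˢ Ioi (w.1 + w.2 ^ (1/(p-1)))))
        ∂(volume.prod (volume.restrict (Ioi 0))) := by
  have h1 : ∫⁻ z, ENNReal.ofReal (|z.1 - z.2| ^ p) ∂ρ
      = ∫⁻ z, (∫⁻ w : ℝ × ℝ, ENNReal.ofReal p *
          ((Ioi (w.1 + w.2 ^ (1/(p-1))) ×ˢ Iic w.1).indicator 1 z
           + (Iic w.1 ×ˢ Ioi (w.1 + w.2 ^ (1/(p-1)))).indicator 1 z)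
        ∂(volume.prod (volume.restrict (Ioi 0)))) ∂ρ := by
    refine lintegral_congr fun z => ?_
    simpa using kernel_gt hp z.1 z.2
  rw [h1]
  have hc : Measurable fun w : ℝ × ℝ => w.1 + w.2 ^ (1/(p-1)) := by
    refine measurable_fst.add ?_
    exact (Real.continuous_rpow_const (le_of_lt (one_div_pos.2 (by linarith)))).measurable.comp
      measurable_snd
  exact lintegral_quadrant_swap _ ρ hc measurable_fst _
end KernelGt

section Main

variable {μ ν : Measure ℝ} [IsProbabilityMeasure μ] [IsProbabilityMeasure ν]

lemma lintegral_cost_qcoupling_le {p : ℝ} (hp : 1 ≤ p) {π : Measure (ℝ × ℝ)}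
    (hπ : IsCoupling π μ ν) :
    ∫⁻ z, ENNReal.ofReal (|z.1 - z.2| ^ p) ∂(qcoupling μ ν)
      ≤ ∫⁻ z, ENNReal.ofReal (|z.1 - z.2| ^ p) ∂π := by
  haveI := isProbabilityMeasure_coupling hπ
  haveI : IsProbabilityMeasure (qcoupling μ ν) :=
    isProbabilityMeasure_coupling (isCoupling_qcoupling (μ := μ) (ν := ν))
  rcases eq_or_lt_of_le hp with hp1 | hp1
  · have hrw : ∀ z : ℝ × ℝ, ENNReal.ofReal (|z.1 - z.2| ^ p) = ENNReal.ofReal |z.1 - z.2| := by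
      intro z
      rw [← hp1, Real.rpow_one]
    rw [lintegral_congr hrw, lintegral_congr hrw, rep_one, rep_one]
    refine lintegral_mono fun a => ?_
    refine mul_le_mul' le_rfl (add_le_add ?_ ?_)
    · rw [qcoupling_quadrant]
      exact coupling_quadrant hπ a a
    · rw [qcoupling_quadrant']
      exact coupling_quadrant' hπ a a
  · rw [rep_gt hp1, rep_gt hp1]
    refine lintegral_mono fun w => ?_
    refine mul_le_mul' le_rfl (add_le_add ?_ ?_)
    · rw [qcoupling_quadrant]
      exact coupling_quadrant hπ _ _
    · rw [qcoupling_quadrant']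
      exact coupling_quadrant' hπ _ _

lemma lintegral_cost_ne_top {p : ℝ} (hp : 1 ≤ p)
    (hμp : Integrable (fun x => |x| ^ p) μ) (hνp : Integrable (fun y => |y| ^ p) ν)
    {π : Measure (ℝ × ℝ)} (hπ : IsCoupling π μ ν) :
    ∫⁻ z, ENNReal.ofReal (|z.1 - z.2| ^ p) ∂π ≠ ⊤ := by
  have hp0 : (0:ℝ) ≤ p := by linarith
  have hb : ∀ z : ℝ × ℝ, ENNReal.ofReal (|z.1 - z.2| ^ p)
      ≤ ENNReal.ofReal ((2:ℝ) ^ p * |z.1| ^ p) + ENNReal.ofReal ((2:ℝ) ^ p * |z.2| ^ p) := by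
    intro z
    have e1 : |z.1 - z.2| ≤ 2 * max |z.1| |z.2| := by
      have h0 := abs_sub z.1 z.2
      have h1 := le_max_left |z.1| |z.2|
      have h2 := le_max_right |z.1| |z.2|
      linarith
    have e2 : |z.1 - z.2| ^ p ≤ (2 * max |z.1| |z.2|) ^ p :=
      Real.rpow_le_rpow (abs_nonneg _) e1 hp0
    have e3 : (2 * max |z.1| |z.2|) ^ p = 2 ^ p * max |z.1| |z.2| ^ p :=
      Real.mul_rpow (by norm_num) (le_max_of_le_left (abs_nonneg _))
    have e4 : max |z.1| |z.2| ^ p ≤ |z.1| ^ p + |z.2| ^ p := by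
      rcases max_cases |z.1| |z.2| with ⟨hm, -⟩ | ⟨hm, -⟩ <;> rw [hm]
      · nlinarith [Real.rpow_nonneg (abs_nonneg z.2) p]
      · nlinarith [Real.rpow_nonneg (abs_nonneg z.1) p]
    have e5 : |z.1 - z.2| ^ p ≤ 2 ^ p * |z.1| ^ p + 2 ^ p * |z.2| ^ p := by
      have h2p : (0:ℝ) ≤ 2 ^ p := Real.rpow_nonneg (by norm_num) p
      nlinarith
    calc ENNReal.ofReal (|z.1 - z.2| ^ p)
        ≤ ENNReal.ofReal (2 ^ p * |z.1| ^ p + 2 ^ p * |z.2| ^ p) :=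
          ENNReal.ofReal_le_ofReal e5
      _ = _ := ENNReal.ofReal_add (by positivity) (by positivity)
  have habs : Measurable fun x : ℝ => ENNReal.ofReal ((2:ℝ) ^ p * |x| ^ p) := by
    apply Measurable.ennreal_ofReal
    exact measurable_const.mul
      ((Real.continuous_rpow_const hp0).measurable.comp measurable_id.abs)
  have hmf : Measurable fun z : ℝ × ℝ => ENNReal.ofReal ((2:ℝ) ^ p * |z.1| ^ p) :=
    habs.comp measurable_fst
  refine ne_top_of_le_ne_top ?_ (lintegral_mono hb)
  rw [lintegral_add_left hmf]
  have t1 : ∫⁻ z, ENNReal.ofReal ((2:ℝ) ^ p * |z.1| ^ p) ∂π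
      = ∫⁻ x, ENNReal.ofReal ((2:ℝ) ^ p * |x| ^ p) ∂μ := by
    have h := lintegral_map (μ := π) habs measurable_fst
    rw [hπ.1] at h
    exact h.symm
  have t2 : ∫⁻ z, ENNReal.ofReal ((2:ℝ) ^ p * |z.2| ^ p) ∂π
      = ∫⁻ x, ENNReal.ofReal ((2:ℝ) ^ p * |x| ^ p) ∂ν := by
    have h := lintegral_map (μ := π) habs measurable_snd
    rw [hπ.2] at h
    exact h.symm
  rw [t1, t2]
  have hfin : ∀ (κ : Measure ℝ), Integrable (fun x => |x| ^ p) κ →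
      ∫⁻ x, ENNReal.ofReal ((2:ℝ) ^ p * |x| ^ p) ∂κ ≠ ⊤ := by
    intro κ hκ
    have hrw : ∀ x : ℝ, ENNReal.ofReal ((2:ℝ) ^ p * |x| ^ p)
        = ENNReal.ofReal ((2:ℝ) ^ p) * ‖|x| ^ p‖ₑ := by
      intro x
      rw [ENNReal.ofReal_mul (by positivity)]
      congr 1
      exact (Real.enorm_eq_ofReal (by positivity)).symm
    rw [lintegral_congr hrw, lintegral_const_mul' _ _ ENNReal.ofReal_ne_top]
    exact ENNReal.mul_ne_top ENNReal.ofReal_ne_top hκ.2.ne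
  exact ENNReal.add_ne_top.2 ⟨hfin μ hμp, hfin ν hνp⟩

end Main

end WQAux

/-- For probability measures on `ℝ` with finite `p`-th moments, the `p`-Wasserstein distance
equals the `L^p` distance between quantile functions. -/
theorem wasserstein_eq_quantile_distance
    (p : ℝ) (hp : 1 ≤ p)
    (μ ν : Measure ℝ) [IsProbabilityMeasure μ] [IsProbabilityMeasure ν]
    (hμp : Integrable (fun x => |x| ^ p) μ) (hνp : Integrable (fun y => |y| ^ p) ν) :
    (sInf {r : ℝ | ∃ π : Measure (ℝ × ℝ), IsCoupling π μ ν ∧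
        r = ∫ z, |z.1 - z.2| ^ p ∂π}) ^ (1 / p)
      = (∫ t in Ioo (0 : ℝ) 1, |quantile μ t - quantile ν t| ^ p) ^ (1 / p) := by
  have hCcont : Continuous fun z : ℝ × ℝ => |z.1 - z.2| ^ p := by
    apply Continuous.rpow_const (continuous_fst.sub continuous_snd).abs
    exact fun z => Or.inr (by linarith)
  have hCnn : ∀ z : ℝ × ℝ, 0 ≤ |z.1 - z.2| ^ p := fun z => Real.rpow_nonneg (abs_nonneg _) _
  haveI hq : IsProbabilityMeasure (WQAux.qcoupling μ ν) :=
    WQAux.isProbabilityMeasure_coupling WQAux.isCoupling_qcoupling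
  have hint : ∀ ρ : Measure (ℝ × ℝ), (∫ z, |z.1 - z.2| ^ p ∂ρ)
      = (∫⁻ z, ENNReal.ofReal (|z.1 - z.2| ^ p) ∂ρ).toReal := fun ρ =>
    integral_eq_lintegral_of_nonneg_ae (Filter.Eventually.of_forall hCnn)
      hCcont.aestronglyMeasurable
  have hTeq : (∫ t in Ioo (0 : ℝ) 1, |quantile μ t - quantile ν t| ^ p)
      = ∫ z, |z.1 - z.2| ^ p ∂(WQAux.qcoupling μ ν) := by
    rw [WQAux.qcoupling, integral_map (WQAux.aemeasurable_qpair μ ν)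
      hCcont.aestronglyMeasurable]
    rfl
  have hmemT : (∫ t in Ioo (0 : ℝ) 1, |quantile μ t - quantile ν t| ^ p)
      ∈ {r : ℝ | ∃ π : Measure (ℝ × ℝ), IsCoupling π μ ν ∧ r = ∫ z, |z.1 - z.2| ^ p ∂π} :=
    ⟨WQAux.qcoupling μ ν, WQAux.isCoupling_qcoupling, hTeq⟩
  have hlb : ∀ r ∈ {r : ℝ | ∃ π : Measure (ℝ × ℝ), IsCoupling π μ ν ∧
      r = ∫ z, |z.1 - z.2| ^ p ∂π},
      (∫ t in Ioo (0 : ℝ) 1, |quantile μ t - quantile ν t| ^ p) ≤ r := by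
    rintro r ⟨π, hπ, rfl⟩
    haveI := WQAux.isProbabilityMeasure_coupling hπ
    rw [hint, hTeq, hint]
    exact ENNReal.toReal_mono (WQAux.lintegral_cost_ne_top hp hμp hνp hπ)
      (WQAux.lintegral_cost_qcoupling_le hp hπ)
  have hinf : sInf {r : ℝ | ∃ π : Measure (ℝ × ℝ), IsCoupling π μ ν ∧
      r = ∫ z, |z.1 - z.2| ^ p ∂π}
      = ∫ t in Ioo (0 : ℝ) 1, |quantile μ t - quantile ν t| ^ p :=
    le_antisymm (csInf_le ⟨_, hlb⟩ hmemT) (le_csInf ⟨_, hmemT⟩ hlb)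
  rw [hinf]
end
end
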